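/- Let F : ℝ → [0,1] be a nondecreasing right-continuous function (a cdf), let p₁ ∈ (0,1) with p₀ = 1 − p₁, let a ≤ b be reals, and write α = F(a), β = F(b). Then for each x ∈ {0,1} and all u ∈ ℝ, the 𝒯-independence cdf bound functions satisfy the law-of-total-probability identity p_x · F̄^𝒯(u | x) + (1 − p_x) · F̲^𝒯(u | 1 − x) = F(u), where the bound function for arm 1 − x is evaluated with probability weight p_{1−x} = 1 − p_x. -/
import Mathlib


open MeasureTheory Set

/-- The `𝒯`-independence upper cdf bound `F̄^𝒯(u | x)` with weight `p`, where
`α = F(a)` and `β = F(b)`. -/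
noncomputable def Fbar (F : ℝ → ℝ) (p α β a b u : ℝ) : ℝ :=
  if F u ≤ p * α then F u / p
  else if u ≤ a then α
  else if u ≤ b then F u
  else if F u ≤ p + β * (1 - p) then β + (F u - β) / p
  else 1

/-- The `𝒯`-independence lower cdf bound `F̲^𝒯(u | x)` with weight `p`, where
`α = F(a)` and `β = F(b)`. -/
noncomputable def FlowT (F : ℝ → ℝ) (p α β a b u : ℝ) : ℝ :=
  if F u ≤ (1 - p) * α then 0
  else if u ≤ a then α + (F u - α) / p
  else if u ≤ b then F u
  else if F u ≤ p * β + (1 - p) then β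
  else 1 + (F u - 1) / p

/-- law-of-total-probability identity for the `𝒯`-independence
cdf bounds: `p_x F̄^𝒯(u | x) + (1 − p_x) F̲^𝒯(u | 1 − x) = F(u)`, where the bound
for arm `1 − x` is evaluated with weight `1 − p_x`. -/
theorem stmt_19 (F : ℝ → ℝ) (hmono : Monotone F)
    (hrc : ∀ u : ℝ, ContinuousWithinAt F (Set.Ici u) u)
    (p₁ : ℝ) (hp₁ : p₁ ∈ Set.Ioo (0 : ℝ) 1)
    (a b : ℝ) (hab : a ≤ b) :
    ∀ px : ℝ, (px = p₁ ∨ px = 1 - p₁) →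
      ∀ u : ℝ,
        px * Fbar F px (F a) (F b) a b u
          + (1 - px) * FlowT F (1 - px) (F a) (F b) a b u = F u := by
  intro px hpx u
  obtain ⟨h0, h1⟩ := hp₁
  have hpx0 : (0:ℝ) < px := by rcases hpx with rfl | rfl <;> linarith
  have hpx1 : px < 1 := by rcases hpx with rfl | rfl <;> linarith
  have hne : px ≠ 0 := ne_of_gt hpx0
  have hne1 : (1:ℝ) - px ≠ 0 := by linarith
  simp only [Fbar, FlowT, show (1:ℝ) - (1 - px) = px by ring,
    show (1 - px) * F b + px = px + F b * (1 - px) by ring]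
  split_ifs <;>
    first
      | (field_simp; try ring)
      | linarith
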